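/- Let θ ∈ (0, 1) ∪ (1, ∞) and let y > 0 solve θy³ − y² + (θ² + 1)y − 2θ = 0, with y ∈ (1, 1/θ) if θ < 1 and y ∈ (1/θ, 1) if θ > 1. Let P be the 3×3 matrix (1/Z)·[[1, θy², θ²], [θ/y, y, θ/y], [θ², θy², 1]], where Z = θ² + θy² + 1. Then κ := (1/2)·max over i, j ∈ {0, 1, 2} of ∑ₗ |Pᵢₗ − Pⱼₗ| equals |1 − θ²|/(1 + θ² + θy²). -/

import Mathlib

/-- For the symmetric boundary-law solution (`x = 1`, `y` solving the cubic
`θy³ - y² + (θ²+1)y - 2θ = 0` with `y ∈ (1, 1/θ)` if `θ < 1` and `y ∈ (1/θ, 1)` if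
`θ > 1`), the contraction coefficient `κ = (1/2) maxᵢⱼ ∑ₗ |Pᵢₗ - Pⱼₗ|` of the transition
matrix `P = (1/Z)·[[1, θy², θ²], [θ/y, y, θ/y], [θ², θy², 1]]`, `Z = θ² + θy² + 1`,
equals `|1 - θ²|/(1 + θ² + θy²)`. -/
theorem sos_kappa_symmetric (θ y : ℝ) (hθ0 : 0 < θ) (hθ1 : θ ≠ 1) (hy : 0 < y)
    (hcubic : θ * y ^ 3 - y ^ 2 + (θ ^ 2 + 1) * y - 2 * θ = 0)
    (hlt : θ < 1 → 1 < y ∧ y < 1 / θ)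
    (hgt : 1 < θ → 1 / θ < y ∧ y < 1) :
    let Z : ℝ := θ ^ 2 + θ * y ^ 2 + 1
    let P : Matrix (Fin 3) (Fin 3) ℝ :=
      (1 / Z) • !![1, θ * y ^ 2, θ ^ 2;
                   θ / y, y, θ / y;
                   θ ^ 2, θ * y ^ 2, 1]
    (1 / 2) * ((Finset.univ : Finset (Fin 3 × Fin 3)).sup' Finset.univ_nonempty
        (fun ij => ∑ l : Fin 3, |P ij.1 l - P ij.2 l|)) =
      |1 - θ ^ 2| / (1 + θ ^ 2 + θ * y ^ 2) := by
  intro Z P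
  have hZdef : Z = θ ^ 2 + θ * y ^ 2 + 1 := rfl
  have hZ : 0 < Z := by rw [hZdef]; positivity
  have hZi : 0 < Z⁻¹ := by positivity
  have habs' : ∀ u v : ℝ, |Z⁻¹ * u - Z⁻¹ * v| = Z⁻¹ * |u - v| := by
    intro u v
    rw [← mul_sub, abs_mul, abs_of_pos hZi]
  have habs1 : ∀ v : ℝ, |Z⁻¹ - Z⁻¹ * v| = Z⁻¹ * |1 - v| := by
    intro v
    rw [show Z⁻¹ - Z⁻¹ * v = Z⁻¹ * (1 - v) by ring, abs_mul, abs_of_pos hZi]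
  have habs2 : ∀ u : ℝ, |Z⁻¹ * u - Z⁻¹| = Z⁻¹ * |u - 1| := by
    intro u
    rw [show Z⁻¹ * u - Z⁻¹ = Z⁻¹ * (u - 1) by ring, abs_mul, abs_of_pos hZi]
  have hkey : (θ * y ^ 2 - y + 1 - θ ^ 2) * y = 2 * θ * (1 - θ * y) := by
    linear_combination hcubic
  have hD01 : |1 - θ / y| + |θ * y ^ 2 - y| + |θ ^ 2 - θ / y| ≤ 2 * |1 - θ ^ 2| := by
    rcases lt_or_gt_of_ne hθ1 with h | h
    · obtain ⟨hy1, hy2⟩ := hlt h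
      have hθy : θ * y < 1 := by
        have := (lt_div_iff₀ hθ0).mp hy2
        linarith
      have hf : 0 < θ * y ^ 2 - y + 1 - θ ^ 2 := by
        nlinarith [mul_pos hθ0 (show (0:ℝ) < 1 - θ * y by linarith)]
      have h1 : |1 - θ / y| = 1 - θ / y := by
        apply abs_of_nonneg
        have : θ / y < 1 := (div_lt_one hy).mpr (by linarith)
        linarith
      have h2 : |θ * y ^ 2 - y| = -(θ * y ^ 2 - y) := by
        apply abs_of_nonpos; nlinarith
      have h3 : |θ ^ 2 - θ / y| = -(θ ^ 2 - θ / y) := by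
        apply abs_of_nonpos
        have : θ ^ 2 < θ / y := by
          rw [lt_div_iff₀ hy]; nlinarith
        linarith
      have h4 : |1 - θ ^ 2| = 1 - θ ^ 2 := by
        apply abs_of_nonneg; nlinarith
      rw [h1, h2, h3, h4]; linarith
    · obtain ⟨hy1, hy2⟩ := hgt h
      have hθy : 1 < θ * y := by
        have := (div_lt_iff₀ hθ0).mp hy1
        linarith
      have hf : θ * y ^ 2 - y + 1 - θ ^ 2 < 0 := by
        nlinarith [mul_pos hθ0 (show (0:ℝ) < θ * y - 1 by linarith)]
      have h1 : |1 - θ / y| = -(1 - θ / y) := by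
        apply abs_of_nonpos
        have : 1 < θ / y := (one_lt_div hy).mpr (by linarith)
        linarith
      have h2 : |θ * y ^ 2 - y| = θ * y ^ 2 - y := by
        apply abs_of_nonneg; nlinarith
      have h3 : |θ ^ 2 - θ / y| = θ ^ 2 - θ / y := by
        apply abs_of_nonneg
        have : θ / y < θ ^ 2 := by
          rw [div_lt_iff₀ hy]; nlinarith
        linarith
      have h4 : |1 - θ ^ 2| = -(1 - θ ^ 2) := by
        apply abs_of_nonpos; nlinarith
      rw [h1, h2, h3, h4]; linarith
  have hub : (Finset.univ : Finset (Fin 3 × Fin 3)).sup' Finset.univ_nonempty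
      (fun ij => ∑ l : Fin 3, |P ij.1 l - P ij.2 l|) ≤ Z⁻¹ * (2 * |1 - θ ^ 2|) := by
    apply Finset.sup'_le
    intro ij _
    fin_cases ij <;>
      simp only [P, Matrix.smul_apply, smul_eq_mul, Fin.sum_univ_three, Matrix.of_apply, Matrix.cons_val, Fin.isValue, Fin.reduceFinMk] <;>
      norm_num <;>
      first
        | positivity
        | (try simp only [habs', habs1, habs2]
           try simp only [abs_sub_comm (θ / y) 1, abs_sub_comm y (θ * y ^ 2),
             abs_sub_comm (θ / y) (θ ^ 2), abs_sub_comm (θ ^ 2) 1]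
           have H := mul_le_mul_of_nonneg_left hD01 hZi.le
           rw [mul_add, mul_add] at H
           linarith [H, show Z⁻¹ * (2 * |1 - θ ^ 2|) = Z⁻¹ * |1 - θ ^ 2| + Z⁻¹ * |1 - θ ^ 2|
             from by ring])
  have hval : (fun ij : Fin 3 × Fin 3 => ∑ l : Fin 3, |P ij.1 l - P ij.2 l|)
      ((0 : Fin 3), (2 : Fin 3)) = Z⁻¹ * (2 * |1 - θ ^ 2|) := by
    simp only [P, Matrix.smul_apply, smul_eq_mul, Fin.sum_univ_three, Matrix.of_apply, Matrix.cons_val]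
    norm_num
    simp only [habs1, habs2]
    rw [abs_sub_comm (θ ^ 2) 1]
    ring
  have hlb : Z⁻¹ * (2 * |1 - θ ^ 2|) ≤ (Finset.univ : Finset (Fin 3 × Fin 3)).sup'
      Finset.univ_nonempty (fun ij => ∑ l : Fin 3, |P ij.1 l - P ij.2 l|) := by
    rw [← hval]
    exact Finset.le_sup' (fun ij : Fin 3 × Fin 3 => ∑ l : Fin 3, |P ij.1 l - P ij.2 l|)
      (Finset.mem_univ ((0 : Fin 3), (2 : Fin 3)))
  rw [le_antisymm hub hlb, hZdef, eq_div_iff (by positivity : (0:ℝ) < 1 + θ ^ 2 + θ * y ^ 2).ne']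
  field_simp
  try ring
  try tauto
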